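/- For a > 0 and all x > 0, (a + 3x²)·log(1 + a/x²) - 2a > 0. -/

import Mathlib

lemma key_ineq (t : ℝ) (ht : 0 < t) : 2 * t < (t + 3) * Real.log (1 + t) := by
  set u := (1 + t) ^ ((1:ℝ)/4) with hu
  have h1 : (1:ℝ) < 1 + t := by linarith
  have hu1 : 1 < u := by
    rw [hu]
    exact (Real.one_lt_rpow_iff_of_pos (by linarith)).2 (Or.inl ⟨h1, by norm_num⟩)
  have hupos : 0 < u := by linarith
  have hu4 : u ^ (4:ℕ) = 1 + t := by
    rw [hu, ← Real.rpow_natCast, ← Real.rpow_mul (by linarith)]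
    norm_num
  have hlog : Real.log (1 + t) = 4 * Real.log u := by
    rw [← hu4, Real.log_pow]; push_cast; ring
  have hlogu : (u - 1) / u < Real.log u := by
    have h := Real.log_lt_sub_one_of_pos (x := u⁻¹) (by positivity)
      (by intro h; rw [inv_eq_one] at h; linarith)
    rw [Real.log_inv] at h
    have : u⁻¹ - 1 = -((u - 1) / u) := by field_simp; ring
    rw [this] at h
    linarith
  have ht3 : t + 3 = u ^ 4 + 2 := by linarith [hu4]
  have htu : t = u ^ 4 - 1 := by linarith [hu4]
  rw [hlog, ht3, htu]
  have hstep : (u ^ 4 + 2) * (4 * ((u - 1) / u)) < (u ^ 4 + 2) * (4 * Real.log u) := by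
    apply mul_lt_mul_of_pos_left _ (by nlinarith)
    linarith [hlogu]
  have hpoly : 2 * (u ^ 4 - 1) ≤ (u ^ 4 + 2) * (4 * ((u - 1) / u)) := by
    rw [← sub_nonneg]
    have heq : (u ^ 4 + 2) * (4 * ((u - 1) / u)) - 2 * (u ^ 4 - 1)
        = (4 * (u ^ 4 + 2) * (u - 1) - 2 * (u ^ 4 - 1) * u) / u := by
      field_simp
    rw [heq]
    apply div_nonneg _ (le_of_lt hupos)
    nlinarith [sq_nonneg (u - 1), sq_nonneg (u ^ 2 - u), sq_nonneg (u ^ 2 - 1), sq_nonneg u]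
  linarith

theorem stmt_3 (a : ℝ) (ha : 0 < a) (x : ℝ) (hx : 0 < x) :
    (a + 3 * x ^ 2) * Real.log (1 + a / x ^ 2) - 2 * a > 0 := by
  have hx2 : 0 < x ^ 2 := by positivity
  have ht : 0 < a / x ^ 2 := by positivity
  have h := key_ineq (a / x ^ 2) ht
  have h2 := mul_lt_mul_of_pos_left h hx2
  have e1 : x ^ 2 * (2 * (a / x ^ 2)) = 2 * a := by field_simp
  have e2 : x ^ 2 * ((a / x ^ 2 + 3) * Real.log (1 + a / x ^ 2))
      = (a + 3 * x ^ 2) * Real.log (1 + a / x ^ 2) := by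
    field_simp
  linarith
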